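/- Let U_k(t) = (u_k(t), v_k(t)) solve dU_k/dt = (L − T_k)U_k with T_k = [[0,−k],[k,0]], L = [[0,0],[0,−1]], k ≠ 0, and let H_k(t) := (1/2)|U_k(t)|² + ε·(k/(1+k²))·u_k v_k. Then dH_k/dt = −ε(k²/(1+k²))u_k² − (1 − ε k²/(1+k²))v_k² − ε(k/(1+k²))u_k v_k, and for any λ ∈ (0,1) and ε ∈ (0, 8λ²/(8λ²+1)), setting κ := min{(ε/2)(1−λ²), 1−ε−ε/(8λ²)} > 0, one has dH_k/dt ≤ −κ|U_k|², hence |U_k(t)| ≤ √((1+ε)/(1−ε)) e^{−κt/(1+ε)} |U_k(0)| for all t ≥ 0. -/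

import Mathlib

set_option maxHeartbeats 1000000

/-- Hypocoercivity for the toy model mode `k ≠ 0`: with `H_k = ½(u²+v²) + ε k/(1+k²) uv`,
the derivative formula holds, `dH_k/dt ≤ -κ |U_k|²` with
`κ = min{(ε/2)(1-λ²), 1-ε-ε/(8λ²)} > 0` for `λ ∈ (0,1)`, `ε ∈ (0, 8λ²/(8λ²+1))`, and hence
`|U_k(t)| ≤ √((1+ε)/(1-ε)) e^{-κ t/(1+ε)} |U_k(0)|` for `t ≥ 0`. -/
theorem stmt_7 (k : ℤ) (hk : k ≠ 0) (ε lam : ℝ)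
    (hlam : lam ∈ Set.Ioo (0:ℝ) 1)
    (hε : ε ∈ Set.Ioo (0:ℝ) (8 * lam ^ 2 / (8 * lam ^ 2 + 1)))
    (u v : ℝ → ℝ)
    (hu : ∀ t : ℝ, HasDerivAt u ((k : ℝ) * v t) t)
    (hv : ∀ t : ℝ, HasDerivAt v (-(k : ℝ) * u t - v t) t) :
    0 < min ((ε / 2) * (1 - lam ^ 2)) (1 - ε - ε / (8 * lam ^ 2)) ∧
    (∀ t : ℝ, HasDerivAt
      (fun s => (1/2) * ((u s) ^ 2 + (v s) ^ 2)
        + ε * ((k : ℝ) / (1 + (k : ℝ) ^ 2)) * u s * v s)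
      (-ε * ((k : ℝ) ^ 2 / (1 + (k : ℝ) ^ 2)) * (u t) ^ 2
        - (1 - ε * ((k : ℝ) ^ 2 / (1 + (k : ℝ) ^ 2))) * (v t) ^ 2
        - ε * ((k : ℝ) / (1 + (k : ℝ) ^ 2)) * u t * v t) t) ∧
    (∀ t : ℝ,
      -ε * ((k : ℝ) ^ 2 / (1 + (k : ℝ) ^ 2)) * (u t) ^ 2
        - (1 - ε * ((k : ℝ) ^ 2 / (1 + (k : ℝ) ^ 2))) * (v t) ^ 2
        - ε * ((k : ℝ) / (1 + (k : ℝ) ^ 2)) * u t * v t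
      ≤ -(min ((ε / 2) * (1 - lam ^ 2)) (1 - ε - ε / (8 * lam ^ 2)))
          * ((u t) ^ 2 + (v t) ^ 2)) ∧
    (∀ t ≥ (0:ℝ), Real.sqrt ((u t) ^ 2 + (v t) ^ 2) ≤
      Real.sqrt ((1 + ε) / (1 - ε))
        * Real.exp (-(min ((ε / 2) * (1 - lam ^ 2)) (1 - ε - ε / (8 * lam ^ 2))) * t / (1 + ε))
        * Real.sqrt ((u 0) ^ 2 + (v 0) ^ 2)) := by
  obtain ⟨hl0, hl1⟩ := hlam
  obtain ⟨hε0, hε1⟩ := hε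
  have h8 : (0:ℝ) < 8 * lam ^ 2 := by positivity
  have hkey : ε * (8 * lam ^ 2 + 1) < 8 * lam ^ 2 := by
    rw [lt_div_iff₀ (by positivity)] at hε1; linarith
  have hc2 : 0 < 1 - ε - ε / (8 * lam ^ 2) := by
    have : ε / (8 * lam ^ 2) < 1 - ε := by rw [div_lt_iff₀ h8]; nlinarith
    linarith
  have hεlt1 : ε < 1 := by
    have : 0 ≤ ε / (8 * lam ^ 2) := by positivity
    linarith
  have hlam2 : lam ^ 2 < 1 := by nlinarith
  have hc1 : 0 < (ε / 2) * (1 - lam ^ 2) :=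
    mul_pos (by linarith) (by linarith)
  have hK0 : 0 < min ((ε / 2) * (1 - lam ^ 2)) (1 - ε - ε / (8 * lam ^ 2)) :=
    lt_min hc1 hc2
  -- abbreviations
  set a : ℝ := (k : ℝ) / (1 + (k : ℝ) ^ 2) with ha_def
  set b : ℝ := (k : ℝ) ^ 2 / (1 + (k : ℝ) ^ 2) with hb_def
  have hk2 : (1:ℝ) ≤ (k : ℝ) ^ 2 := by
    have h1 : (1:ℤ) ≤ |k| := Int.one_le_abs hk
    have : (1:ℝ) ≤ |(k:ℝ)| := by exact_mod_cast (by exact_mod_cast h1 : (1:ℝ) ≤ (|k| : ℤ))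
    calc (1:ℝ) = 1 * 1 := by ring
    _ ≤ |(k:ℝ)| * |(k:ℝ)| := by
        apply mul_le_mul this this (by norm_num) (abs_nonneg _)
    _ = (k:ℝ) ^ 2 := by rw [← abs_mul, abs_mul_self]; ring
  have hd : (0:ℝ) < 1 + (k : ℝ) ^ 2 := by positivity
  have ha1 : -(1/2) ≤ a := by
    rw [ha_def, neg_le, ← neg_div, div_le_iff₀ hd]; nlinarith [sq_nonneg ((k:ℝ) + 1)]
  have ha2 : a ≤ 1/2 := by
    rw [ha_def, div_le_iff₀ hd]; nlinarith [sq_nonneg ((k:ℝ) - 1)]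
  have hb1 : 1/2 ≤ b := by rw [hb_def, le_div_iff₀ hd]; nlinarith
  have hb2 : b ≤ 1 := by rw [hb_def, div_le_one hd]; linarith
  -- derivative formula
  have hder : ∀ t : ℝ, HasDerivAt
      (fun s => (1/2) * ((u s) ^ 2 + (v s) ^ 2) + ε * a * u s * v s)
      (-ε * b * (u t) ^ 2 - (1 - ε * b) * (v t) ^ 2 - ε * a * u t * v t) t := by
    intro t
    have e1 := (((hu t).pow 2).add ((hv t).pow 2)).const_mul (1/2 : ℝ)
    have e2 := ((hu t).const_mul (ε * a)).mul (hv t)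
    have := e1.add e2
    convert this using 1
    all_goals try rfl
    rw [ha_def, hb_def]
    push_cast
    field_simp
    ring
  -- the pointwise inequality
  have hineq : ∀ t : ℝ,
      -ε * b * (u t) ^ 2 - (1 - ε * b) * (v t) ^ 2 - ε * a * u t * v t
      ≤ -(min ((ε / 2) * (1 - lam ^ 2)) (1 - ε - ε / (8 * lam ^ 2)))
          * ((u t) ^ 2 + (v t) ^ 2) := by
    intro t
    set K := min ((ε / 2) * (1 - lam ^ 2)) (1 - ε - ε / (8 * lam ^ 2)) with hKdef
    have hκ1 : K ≤ (ε / 2) * (1 - lam ^ 2) := min_le_left _ _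
    have hκ2 : K ≤ 1 - ε - ε / (8 * lam ^ 2) := min_le_right _ _
    have hM0 : (0:ℝ) ≤ ε / (8 * lam ^ 2) := by positivity
    have hMe : ε / (8 * lam ^ 2) * (8 * lam ^ 2) = ε :=
      div_mul_cancel₀ _ (ne_of_gt h8)
    set M := ε / (8 * lam ^ 2) with hMdef
    rw [← hMe] at hκ1 ⊢
    rw [show (1 : ℝ) - ε - M = 1 - M * (8 * lam ^ 2) - M from by rw [hMe]] at hκ2
    set A := u t; set B := v t
    linarith [mul_nonneg (mul_nonneg hM0 (by linarith : (0:ℝ) ≤ 1/2 + a))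
        (sq_nonneg (2 * lam ^ 2 * A + B)),
      mul_nonneg (mul_nonneg hM0 (by linarith : (0:ℝ) ≤ 1/2 - a))
        (sq_nonneg (2 * lam ^ 2 * A - B)),
      mul_nonneg (mul_nonneg (by nlinarith : (0:ℝ) ≤ M * (8 * lam ^ 2))
        (by linarith : (0:ℝ) ≤ b - 1/2)) (sq_nonneg A),
      mul_nonneg (mul_nonneg (by nlinarith : (0:ℝ) ≤ M * (8 * lam ^ 2))
        (by linarith : (0:ℝ) ≤ 1 - b)) (sq_nonneg B),
      mul_nonneg (by linarith : (0:ℝ) ≤ M * (8 * lam ^ 2) / 2 * (1 - lam ^ 2) - K)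
        (sq_nonneg A),
      mul_nonneg (by linarith : (0:ℝ) ≤ 1 - M * (8 * lam ^ 2) - M - K)
        (sq_nonneg B)]
  refine ⟨hK0, hder, hineq, ?_⟩
  -- Gronwall part
  set K := min ((ε / 2) * (1 - lam ^ 2)) (1 - ε - ε / (8 * lam ^ 2)) with hKdef
  set c : ℝ := 2 * K / (1 + ε) with hc_def
  have hε1' : (0:ℝ) < 1 + ε := by linarith
  have hc0 : 0 ≤ c := by positivity
  set H : ℝ → ℝ := fun s => (1/2) * ((u s) ^ 2 + (v s) ^ 2) + ε * a * u s * v s with hH_def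
  have hHhigh : ∀ s : ℝ, H s ≤ (1 + ε) / 2 * ((u s) ^ 2 + (v s) ^ 2) := by
    intro s
    simp only [hH_def]
    nlinarith [mul_nonneg (mul_nonneg hε0.le (by linarith : (0:ℝ) ≤ 1/2 - a))
        (sq_nonneg (u s + v s)),
      mul_nonneg (mul_nonneg hε0.le (by linarith : (0:ℝ) ≤ 1/2 + a))
        (sq_nonneg (u s - v s))]
  have hHlow : ∀ s : ℝ, (1 - ε) / 2 * ((u s) ^ 2 + (v s) ^ 2) ≤ H s := by
    intro s
    simp only [hH_def]
    nlinarith [mul_nonneg (mul_nonneg hε0.le (by linarith : (0:ℝ) ≤ 1/2 + a))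
        (sq_nonneg (u s + v s)),
      mul_nonneg (mul_nonneg hε0.le (by linarith : (0:ℝ) ≤ 1/2 - a))
        (sq_nonneg (u s - v s))]
  -- g = H * exp(c s) is antitone
  set g : ℝ → ℝ := fun s => H s * Real.exp (c * s) with hg_def
  have hg' : ∀ s : ℝ, HasDerivAt g
      ((-ε * b * (u s) ^ 2 - (1 - ε * b) * (v s) ^ 2 - ε * a * u s * v s) * Real.exp (c * s)
        + H s * (Real.exp (c * s) * (c * 1))) s := by
    intro s
    exact (hder s).mul (((hasDerivAt_id s).const_mul c).exp)
  have hganti : Antitone g := by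
    apply antitone_of_deriv_nonpos (fun s => (hg' s).differentiableAt)
    intro s
    rw [(hg' s).deriv]
    have h1 : -ε * b * (u s) ^ 2 - (1 - ε * b) * (v s) ^ 2 - ε * a * u s * v s
        ≤ -K * ((u s) ^ 2 + (v s) ^ 2) := hineq s
    have h2 : c * H s ≤ K * ((u s) ^ 2 + (v s) ^ 2) := by
      have hcH : c * H s ≤ c * ((1 + ε) / 2 * ((u s) ^ 2 + (v s) ^ 2)) :=
        mul_le_mul_of_nonneg_left (hHhigh s) hc0
      have heq : c * ((1 + ε) / 2 * ((u s) ^ 2 + (v s) ^ 2))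
          = K * ((u s) ^ 2 + (v s) ^ 2) := by
        rw [hc_def]; field_simp
      exact le_of_le_of_eq hcH heq
    have hsum : (-ε * b * (u s) ^ 2 - (1 - ε * b) * (v s) ^ 2 - ε * a * u s * v s)
        + c * H s ≤ 0 := by
      calc (-ε * b * (u s) ^ 2 - (1 - ε * b) * (v s) ^ 2 - ε * a * u s * v s) + c * H s
          ≤ -K * ((u s) ^ 2 + (v s) ^ 2) + K * ((u s) ^ 2 + (v s) ^ 2) := add_le_add h1 h2
        _ = 0 := by ring
    have hmul := mul_le_mul_of_nonneg_right hsum (Real.exp_pos (c * s)).le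
    calc (-ε * b * (u s) ^ 2 - (1 - ε * b) * (v s) ^ 2 - ε * a * u s * v s)
          * Real.exp (c * s) + H s * (Real.exp (c * s) * (c * 1))
        = ((-ε * b * (u s) ^ 2 - (1 - ε * b) * (v s) ^ 2 - ε * a * u s * v s)
          + c * H s) * Real.exp (c * s) := by ring
      _ ≤ 0 * Real.exp (c * s) := hmul
      _ = 0 := by rw [zero_mul]
  intro t ht
  have hgt : g t ≤ g 0 := hganti ht
  have h1 : H t * Real.exp (c * t) ≤ H 0 := by
    have := hgt
    simp only [hg_def] at this
    simpa using this
  have hHt : H t ≤ H 0 * Real.exp (-(c * t)) := by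
    calc H t = H t * Real.exp (c * t) * Real.exp (-(c * t)) := by
          rw [mul_assoc, ← Real.exp_add]; simp
      _ ≤ H 0 * Real.exp (-(c * t)) :=
          mul_le_mul_of_nonneg_right h1 (Real.exp_pos _).le
  have h1e : (0:ℝ) < 1 - ε := by linarith
  have l1 : (1 - ε) / 2 * ((u t) ^ 2 + (v t) ^ 2) ≤ H t := hHlow t
  have l3 : H 0 * Real.exp (-(c * t)) ≤
      (1 + ε) / 2 * ((u 0) ^ 2 + (v 0) ^ 2) * Real.exp (-(c * t)) :=
    mul_le_mul_of_nonneg_right (hHhigh 0) (Real.exp_pos _).le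
  have hchain : (1 - ε) / 2 * ((u t) ^ 2 + (v t) ^ 2)
      ≤ (1 + ε) / 2 * ((u 0) ^ 2 + (v 0) ^ 2) * Real.exp (-(c * t)) :=
    (l1.trans hHt).trans l3
  have hfinal : (u t) ^ 2 + (v t) ^ 2
      ≤ (1 + ε) / (1 - ε) * Real.exp (-(c * t)) * ((u 0) ^ 2 + (v 0) ^ 2) := by
    calc (u t) ^ 2 + (v t) ^ 2
        = 2 / (1 - ε) * ((1 - ε) / 2 * ((u t) ^ 2 + (v t) ^ 2)) := by
          field_simp
      _ ≤ 2 / (1 - ε) * ((1 + ε) / 2 * ((u 0) ^ 2 + (v 0) ^ 2) * Real.exp (-(c * t))) :=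
          mul_le_mul_of_nonneg_left hchain (by positivity)
      _ = (1 + ε) / (1 - ε) * Real.exp (-(c * t)) * ((u 0) ^ 2 + (v 0) ^ 2) := by
          field_simp
  have hRHS0 : 0 ≤ Real.sqrt ((1 + ε) / (1 - ε))
      * Real.exp (-K * t / (1 + ε)) * Real.sqrt ((u 0) ^ 2 + (v 0) ^ 2) := by positivity
  have hsq : (u t) ^ 2 + (v t) ^ 2 ≤
      (Real.sqrt ((1 + ε) / (1 - ε))
        * Real.exp (-K * t / (1 + ε)) * Real.sqrt ((u 0) ^ 2 + (v 0) ^ 2)) ^ 2 := by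
    have e1 : (Real.sqrt ((1 + ε) / (1 - ε))) ^ 2 = (1 + ε) / (1 - ε) :=
      Real.sq_sqrt (by positivity)
    have e2 : (Real.sqrt ((u 0) ^ 2 + (v 0) ^ 2)) ^ 2 = (u 0) ^ 2 + (v 0) ^ 2 :=
      Real.sq_sqrt (by positivity)
    have e3 : (Real.exp (-K * t / (1 + ε))) ^ 2 = Real.exp (-(c * t)) := by
      rw [sq, ← Real.exp_add, hc_def]
      congr 1
      field_simp
      ring
    calc (u t) ^ 2 + (v t) ^ 2
        ≤ (1 + ε) / (1 - ε) * Real.exp (-(c * t)) * ((u 0) ^ 2 + (v 0) ^ 2) := hfinal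
      _ = _ := by rw [mul_pow, mul_pow, e1, e2, e3]
  calc Real.sqrt ((u t) ^ 2 + (v t) ^ 2)
      ≤ Real.sqrt ((Real.sqrt ((1 + ε) / (1 - ε))
        * Real.exp (-K * t / (1 + ε)) * Real.sqrt ((u 0) ^ 2 + (v 0) ^ 2)) ^ 2) :=
        Real.sqrt_le_sqrt hsq
    _ = _ := Real.sqrt_sq hRHS0
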